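/- Let X = {1,2,3,4} and let G_m consist of 8 copies of T1 (clusters {1,2},{1,2,3}), 6 copies of T2 (clusters {1,2},{1,2,4}), 1 copy of T3 (clusters {1,3},{1,2,3}), 7 copies of T4 (clusters {1,3},{1,3,4}), 7 copies of T6 (clusters {1,4},{1,3,4}) and 4 copies of T15 (clusters {1,4},{2,3}). Then T1 is the unique minimizer of the total MDC score over all 15 rooted binary trees on X with score 50, T6 has score 55, yet for every 3-element subset Y of X, the restriction T6|_Y has strictly smaller total MDC score on the restricted gene trees than T1|_Y. -/
import Mathlib


open scoped Classical

/-- A rooted binary phylogenetic tree on the leaf set `L ⊆ X`, encoded (as usual,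
and as in the paper) by its set of clusters: a binary hierarchy on `L` containing
`L` and all singletons. -/
structure PTree (X : Type*) [DecidableEq X] (L : Finset X) where
  clusters : Finset (Finset X)
  subset_leaves : ∀ C ∈ clusters, C ⊆ L
  cluster_nonempty : ∀ C ∈ clusters, C.Nonempty
  leaves_mem : L ∈ clusters
  singleton_mem : ∀ x ∈ L, ({x} : Finset X) ∈ clusters
  hierarchy : ∀ C ∈ clusters, ∀ D ∈ clusters, C ⊆ D ∨ D ⊆ C ∨ Disjoint C D
  binary : ∀ C ∈ clusters, 1 < C.card →
    ∃ A ∈ clusters, ∃ B ∈ clusters, Disjoint A B ∧ A ∪ B = C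

variable {X : Type*} [DecidableEq X]

/-- The maximal members of the cluster family `Tcl` contained in `C`. -/
noncomputable def maxClustersIn (Tcl : Finset (Finset X)) (C : Finset X) :
    Finset (Finset X) :=
  Tcl.filter (fun D => D ⊆ C ∧ ∀ D' ∈ Tcl, D ⊂ D' → ¬ D' ⊆ C)

/-- `k_T(C)`: the number of maximal clusters of `T` contained in `C`. -/
noncomputable def kOf (Tcl : Finset (Finset X)) (C : Finset X) : ℕ :=
  (maxClustersIn Tcl C).card

/-- MDC score computed from cluster families: the sum over nontrivial clusters `C`
of the species tree (clusters other than the leaf set `L` and singletons) of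
`k_T(C) - 1` (Nakhleh et al.'s formula). -/
noncomputable def mdcOfClusters (Tcl Scl : Finset (Finset X)) (L : Finset X) : ℕ :=
  ∑ C ∈ Scl.filter (fun C => C ≠ L ∧ C.card ≠ 1), (kOf Tcl C - 1)

/-- The MDC score `l(T,S)` of a gene tree `T` with respect to a species tree `S`. -/
noncomputable def mdc {L : Finset X} (T S : PTree X L) : ℕ :=
  mdcOfClusters T.clusters S.clusters L

/-- The cluster set of the restriction `T|_Y` of `T` to the leaf set `Y`:
the nonempty intersections of clusters of `T` with `Y`. -/
noncomputable def restrictClusters {L : Finset X} (T : PTree X L) (Y : Finset X) :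
    Finset (Finset X) :=
  (T.clusters.image (· ∩ Y)).filter (fun C => C.Nonempty)

/-- The full cluster set of a rooted binary tree on leaf set `{0,1,2,3} = Fin 4`
with nontrivial clusters `a` and `b`. -/
noncomputable def cl4 (a b : Finset (Fin 4)) : Finset (Finset (Fin 4)) :=
  {Finset.univ, {0}, {1}, {2}, {3}, a, b}

lemma ptree_ext {X : Type*} [DecidableEq X] {L : Finset X} {T S : PTree X L}
    (h : T.clusters = S.clusters) : T = S := by
  cases T; cases S; simp_all

/-- Combined weight of a species cluster `C` w.r.t. the gene tree multiset. -/
noncomputable def wgt (C : Finset (Fin 4)) : ℕ :=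
  8 * (kOf (cl4 {0,1} {0,1,2}) C - 1) + 6 * (kOf (cl4 {0,1} {0,1,3}) C - 1)
  + 1 * (kOf (cl4 {0,2} {0,1,2}) C - 1) + 7 * (kOf (cl4 {0,2} {0,2,3}) C - 1)
  + 7 * (kOf (cl4 {0,3} {0,2,3}) C - 1) + 4 * (kOf (cl4 {0,3} {1,2}) C - 1)

lemma total_eq (Scl : Finset (Finset (Fin 4))) :
    8 * mdcOfClusters (cl4 {0,1} {0,1,2}) Scl Finset.univ
    + 6 * mdcOfClusters (cl4 {0,1} {0,1,3}) Scl Finset.univ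
    + 1 * mdcOfClusters (cl4 {0,2} {0,1,2}) Scl Finset.univ
    + 7 * mdcOfClusters (cl4 {0,2} {0,2,3}) Scl Finset.univ
    + 7 * mdcOfClusters (cl4 {0,3} {0,2,3}) Scl Finset.univ
    + 4 * mdcOfClusters (cl4 {0,3} {1,2}) Scl Finset.univ
    = ∑ C ∈ Scl.filter (fun C => C ≠ Finset.univ ∧ C.card ≠ 1), wgt C := by
  simp only [mdcOfClusters, wgt, Finset.mul_sum, ← Finset.sum_add_distrib]

lemma key51 : ∀ a b : Finset (Fin 4),
    ((a.card = 2 ∧ b.card = 3 ∧ a ⊆ b) ∨ (a.card = 2 ∧ b.card = 2 ∧ Disjoint a b)) →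
    ¬(a = {0,1} ∧ b = {0,1,2}) → 51 ≤ wgt a + wgt b := by decide

lemma mem_cl4_of_compat : ∀ C : Finset (Fin 4), C.Nonempty →
    (C ⊆ ({0,1} : Finset (Fin 4)) ∨ ({0,1} : Finset (Fin 4)) ⊆ C ∨ Disjoint C ({0,1} : Finset (Fin 4))) →
    (C ⊆ ({0,1,2} : Finset (Fin 4)) ∨ ({0,1,2} : Finset (Fin 4)) ⊆ C ∨ Disjoint C ({0,1,2} : Finset (Fin 4))) →
    C ∈ cl4 {0,1} {0,1,2} := by decide

lemma exists_good (S : PTree (Fin 4) Finset.univ) :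
    ∃ a ∈ S.clusters, ∃ b ∈ S.clusters,
      ((a.card = 2 ∧ b.card = 3 ∧ a ⊆ b) ∨ (a.card = 2 ∧ b.card = 2 ∧ Disjoint a b)) := by
  have tripleCase : ∀ t ∈ S.clusters, t.card = 3 →
      ∃ a ∈ S.clusters, a.card = 2 ∧ a ⊆ t := by
    intro t ht hc
    obtain ⟨C, hC, D, hD, hd', hu'⟩ := S.binary _ ht (by omega)
    have h3 : C.card + D.card = 3 := by
      rw [← Finset.card_union_of_disjoint hd', hu', hc]
    have hC1 : 1 ≤ C.card := Finset.card_pos.mpr (S.cluster_nonempty _ hC)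
    have hD1 : 1 ≤ D.card := Finset.card_pos.mpr (S.cluster_nonempty _ hD)
    rcases Nat.lt_or_ge C.card 2 with h | h
    · exact ⟨D, hD, by omega, hu' ▸ Finset.subset_union_right⟩
    · exact ⟨C, hC, by omega, hu' ▸ Finset.subset_union_left⟩
  obtain ⟨A, hA, B, hB, hd, hu⟩ := S.binary _ S.leaves_mem (by simp)
  have hcard : A.card + B.card = 4 := by
    rw [← Finset.card_union_of_disjoint hd, hu]
    simp
  have hA1 : 1 ≤ A.card := Finset.card_pos.mpr (S.cluster_nonempty _ hA)
  have hB1 : 1 ≤ B.card := Finset.card_pos.mpr (S.cluster_nonempty _ hB)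
  have h3 : A.card = 1 ∨ A.card = 2 ∨ A.card = 3 := by omega
  rcases h3 with h | h | h
  · obtain ⟨a, ha, hac, hab⟩ := tripleCase B hB (by omega)
    exact ⟨a, ha, B, hB, Or.inl ⟨hac, by omega, hab⟩⟩
  · exact ⟨A, hA, B, hB, Or.inr ⟨h, by omega, hd⟩⟩
  · obtain ⟨a, ha, hac, hab⟩ := tripleCase A hA h
    exact ⟨a, ha, A, hA, Or.inl ⟨hac, h, hab⟩⟩

/-- Restriction of a cluster family to `Y`. -/
noncomputable def rc (F : Finset (Finset (Fin 4))) (Y : Finset (Fin 4)) :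
    Finset (Finset (Fin 4)) :=
  (F.image (· ∩ Y)).filter (fun C => C.Nonempty)

lemma part4aux : ∀ Y : Finset (Fin 4), Y.card = 3 →
      8 * mdcOfClusters (rc (cl4 {0,1} {0,1,2}) Y) (rc (cl4 {0,3} {0,2,3}) Y) Y + 6 * mdcOfClusters (rc (cl4 {0,1} {0,1,3}) Y) (rc (cl4 {0,3} {0,2,3}) Y) Y + 1 * mdcOfClusters (rc (cl4 {0,2} {0,1,2}) Y) (rc (cl4 {0,3} {0,2,3}) Y) Y + 7 * mdcOfClusters (rc (cl4 {0,2} {0,2,3}) Y) (rc (cl4 {0,3} {0,2,3}) Y) Y + 7 * mdcOfClusters (rc (cl4 {0,3} {0,2,3}) Y) (rc (cl4 {0,3} {0,2,3}) Y) Y + 4 * mdcOfClusters (rc (cl4 {0,3} {1,2}) Y) (rc (cl4 {0,3} {0,2,3}) Y) Y <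
      8 * mdcOfClusters (rc (cl4 {0,1} {0,1,2}) Y) (rc (cl4 {0,1} {0,1,2}) Y) Y + 6 * mdcOfClusters (rc (cl4 {0,1} {0,1,3}) Y) (rc (cl4 {0,1} {0,1,2}) Y) Y + 1 * mdcOfClusters (rc (cl4 {0,2} {0,1,2}) Y) (rc (cl4 {0,1} {0,1,2}) Y) Y + 7 * mdcOfClusters (rc (cl4 {0,2} {0,2,3}) Y) (rc (cl4 {0,1} {0,1,2}) Y) Y + 7 * mdcOfClusters (rc (cl4 {0,3} {0,2,3}) Y) (rc (cl4 {0,1} {0,1,2}) Y) Y + 4 * mdcOfClusters (rc (cl4 {0,3} {1,2}) Y) (rc (cl4 {0,1} {0,1,2}) Y) Y := by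
  decide
/-- Example 3: with `G_m` = 8 copies of `T₁`, 6 of `T₂`, 1 of `T₃`, 7 of `T₄`,
7 of `T₆` and 4 of `T₁₅`, the tree `T₁` is the unique minimizer of the total MDC
score with score 50, `T₆` has score 55, yet on every 3-element subset `Y` the
restriction `T₆|_Y` scores strictly less than `T₁|_Y`. -/
theorem stmt15 (T1 T2 T3 T4 T6 T15 : PTree (Fin 4) Finset.univ)
    (h1 : T1.clusters = cl4 {0,1} {0,1,2})
    (h2 : T2.clusters = cl4 {0,1} {0,1,3})
    (h3 : T3.clusters = cl4 {0,2} {0,1,2})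
    (h4 : T4.clusters = cl4 {0,2} {0,2,3})
    (h6 : T6.clusters = cl4 {0,3} {0,2,3})
    (h15 : T15.clusters = cl4 {0,3} {1,2}) :
    8 * mdc T1 T1 + 6 * mdc T2 T1 + 1 * mdc T3 T1 + 7 * mdc T4 T1 + 7 * mdc T6 T1 + 4 * mdc T15 T1 = 50 ∧
    (∀ S : PTree (Fin 4) Finset.univ, S ≠ T1 →
      8 * mdc T1 T1 + 6 * mdc T2 T1 + 1 * mdc T3 T1 + 7 * mdc T4 T1 + 7 * mdc T6 T1 + 4 * mdc T15 T1 < 8 * mdc T1 S + 6 * mdc T2 S + 1 * mdc T3 S + 7 * mdc T4 S + 7 * mdc T6 S + 4 * mdc T15 S) ∧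
    8 * mdc T1 T6 + 6 * mdc T2 T6 + 1 * mdc T3 T6 + 7 * mdc T4 T6 + 7 * mdc T6 T6 + 4 * mdc T15 T6 = 55 ∧
    (∀ Y : Finset (Fin 4), Y.card = 3 →
      8 * mdcOfClusters (restrictClusters T1 Y) (restrictClusters T6 Y) Y + 6 * mdcOfClusters (restrictClusters T2 Y) (restrictClusters T6 Y) Y + 1 * mdcOfClusters (restrictClusters T3 Y) (restrictClusters T6 Y) Y + 7 * mdcOfClusters (restrictClusters T4 Y) (restrictClusters T6 Y) Y + 7 * mdcOfClusters (restrictClusters T6 Y) (restrictClusters T6 Y) Y + 4 * mdcOfClusters (restrictClusters T15 Y) (restrictClusters T6 Y) Y <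
      8 * mdcOfClusters (restrictClusters T1 Y) (restrictClusters T1 Y) Y + 6 * mdcOfClusters (restrictClusters T2 Y) (restrictClusters T1 Y) Y + 1 * mdcOfClusters (restrictClusters T3 Y) (restrictClusters T1 Y) Y + 7 * mdcOfClusters (restrictClusters T4 Y) (restrictClusters T1 Y) Y + 7 * mdcOfClusters (restrictClusters T6 Y) (restrictClusters T1 Y) Y + 4 * mdcOfClusters (restrictClusters T15 Y) (restrictClusters T1 Y) Y) := by
  have l50 : 8 * mdcOfClusters (cl4 {0,1} {0,1,2}) (cl4 {0,1} {0,1,2}) Finset.univ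
      + 6 * mdcOfClusters (cl4 {0,1} {0,1,3}) (cl4 {0,1} {0,1,2}) Finset.univ
      + 1 * mdcOfClusters (cl4 {0,2} {0,1,2}) (cl4 {0,1} {0,1,2}) Finset.univ
      + 7 * mdcOfClusters (cl4 {0,2} {0,2,3}) (cl4 {0,1} {0,1,2}) Finset.univ
      + 7 * mdcOfClusters (cl4 {0,3} {0,2,3}) (cl4 {0,1} {0,1,2}) Finset.univ
      + 4 * mdcOfClusters (cl4 {0,3} {1,2}) (cl4 {0,1} {0,1,2}) Finset.univ = 50 := by
    decide
  refine ⟨?_, ?_, ?_, ?_⟩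
  · simp only [mdc, h1, h2, h3, h4, h6, h15]
    exact l50
  · intro S hS
    simp only [mdc, h1, h2, h3, h4, h6, h15]
    rw [l50, total_eq S.clusters]
    obtain ⟨a, ha, b, hb, hgood⟩ := exists_good S
    have hab : a ≠ b := by
      rcases hgood with ⟨h2, h3', _⟩ | ⟨h2, h3', hd⟩
      · intro h; rw [h] at h2; omega
      · intro h; rw [h] at hd
        have hbe : b = ⊥ := hd.eq_bot_of_self
        rw [h, hbe] at h2; simp at h2
    by_cases hT1 : a = ({0,1} : Finset (Fin 4)) ∧ b = ({0,1,2} : Finset (Fin 4))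
    · exfalso
      apply hS
      apply ptree_ext
      rw [h1]
      have ha01 : ({0,1} : Finset (Fin 4)) ∈ S.clusters := hT1.1 ▸ ha
      have hb012 : ({0,1,2} : Finset (Fin 4)) ∈ S.clusters := hT1.2 ▸ hb
      apply Finset.Subset.antisymm
      · intro C hC
        exact mem_cl4_of_compat C (S.cluster_nonempty C hC)
          (S.hierarchy C hC _ ha01) (S.hierarchy C hC _ hb012)
      · intro C hC
        simp only [cl4, Finset.mem_insert, Finset.mem_singleton] at hC
        rcases hC with rfl | rfl | rfl | rfl | rfl | rfl | rfl
        · exact S.leaves_mem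
        · exact S.singleton_mem 0 (Finset.mem_univ _)
        · exact S.singleton_mem 1 (Finset.mem_univ _)
        · exact S.singleton_mem 2 (Finset.mem_univ _)
        · exact S.singleton_mem 3 (Finset.mem_univ _)
        · exact ha01
        · exact hb012
    · have h51 := key51 a b hgood hT1
      have hmemf : ∀ c ∈ S.clusters, (c.card = 2 ∨ c.card = 3) →
          c ∈ S.clusters.filter (fun C => C ≠ Finset.univ ∧ C.card ≠ 1) := by
        intro c hc hcc
        refine Finset.mem_filter.mpr ⟨hc, ?_, by omega⟩
        intro h
        rw [h, Finset.card_univ, Fintype.card_fin] at hcc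
        omega
      have hsub : ({a, b} : Finset (Finset (Fin 4))) ⊆
          S.clusters.filter (fun C => C ≠ Finset.univ ∧ C.card ≠ 1) := by
        intro x hx
        rcases Finset.mem_insert.mp hx with rfl | hx
        · rcases hgood with ⟨h2, _, _⟩ | ⟨h2, _, _⟩ <;> exact hmemf x ha (Or.inl h2)
        · rw [Finset.mem_singleton] at hx
          subst hx
          rcases hgood with ⟨_, h3', _⟩ | ⟨_, h3', _⟩
          · exact hmemf x hb (Or.inr h3')
          · exact hmemf x hb (Or.inl h3')
      calc (50 : ℕ) < 51 := by norm_num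
        _ ≤ wgt a + wgt b := h51
        _ = ∑ C ∈ ({a, b} : Finset (Finset (Fin 4))), wgt C := (Finset.sum_pair hab).symm
        _ ≤ _ := Finset.sum_le_sum_of_subset hsub
  · simp only [mdc, h1, h2, h3, h4, h6, h15]
    decide
  · intro Y hY
    have e1 : restrictClusters T1 Y = rc (cl4 {0,1} {0,1,2}) Y := by
      simp only [restrictClusters, rc, h1]
    have e2 : restrictClusters T2 Y = rc (cl4 {0,1} {0,1,3}) Y := by
      simp only [restrictClusters, rc, h2]
    have e3 : restrictClusters T3 Y = rc (cl4 {0,2} {0,1,2}) Y := by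
      simp only [restrictClusters, rc, h3]
    have e4 : restrictClusters T4 Y = rc (cl4 {0,2} {0,2,3}) Y := by
      simp only [restrictClusters, rc, h4]
    have e6 : restrictClusters T6 Y = rc (cl4 {0,3} {0,2,3}) Y := by
      simp only [restrictClusters, rc, h6]
    have e15 : restrictClusters T15 Y = rc (cl4 {0,3} {1,2}) Y := by
      simp only [restrictClusters, rc, h15]
    rw [e1, e2, e3, e4, e6, e15]
    exact part4aux Y hY
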